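/- arXiv:2110.02485 — 4 statements merged into one kernel-verified Lean document; each statement's English description precedes it below -/
import Mathlib

section
/- If Q ∈ R^{ℓ×ℓ×n} satisfies Q^T * Q = I (t-product orthogonality), then for every A ∈ R^{ℓ×m×n}, ‖Q*A‖_F = ‖A‖_F, where ‖·‖_F is the Frobenius norm of the tensor (square root of sum of squares of all entries). -/
open scoped BigOperators
open Finset

noncomputable section

/-- Circular convolution of tubes in ℝ^n. -/
def conv {n : ℕ} [NeZero n] (a b : ZMod n → ℝ) : ZMod n → ℝ :=
  fun i => ∑ j : ZMod n, a j * b (i - j)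

/-- Circular convolution of tubes in ℂ^n. -/
def convC {n : ℕ} [NeZero n] (a b : ZMod n → ℂ) : ZMod n → ℂ :=
  fun i => ∑ j : ZMod n, a j * b (i - j)

/-- Unnormalized discrete Fourier transform with ω = exp(-2πi/n). -/
def dft {n : ℕ} [NeZero n] (a : ZMod n → ℂ) : ZMod n → ℂ :=
  fun k => ∑ j : ZMod n,
    a j * Complex.exp (-(2 * (Real.pi : ℂ) * Complex.I * (j.val : ℂ) * (k.val : ℂ)) / (n : ℂ))

/-- The t-product of third order tensors. -/
def tmul {n ℓ p m : ℕ} [NeZero n] (A : Fin ℓ → Fin p → ZMod n → ℝ)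
    (B : Fin p → Fin m → ZMod n → ℝ) : Fin ℓ → Fin m → ZMod n → ℝ :=
  fun i j t => ∑ k : Fin p, conv (A i k) (B k j) t

/-- Tensor transpose: transpose each frontal slice and reverse the order of slices 2..n. -/
def tT {n ℓ m : ℕ} (A : Fin ℓ → Fin m → ZMod n → ℝ) : Fin m → Fin ℓ → ZMod n → ℝ :=
  fun j i k => A i j (-k)

/-- Identity tensor: first frontal slice is the identity matrix, others are zero. -/
def tId (n m : ℕ) : Fin m → Fin m → ZMod n → ℝ :=
  fun i j k => if i = j ∧ k = 0 then 1 else 0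

/-- Frobenius norm of a real third order tensor. -/
def frob {n ℓ m : ℕ} [NeZero n] (A : Fin ℓ → Fin m → ZMod n → ℝ) : ℝ :=
  Real.sqrt (∑ i : Fin ℓ, ∑ j : Fin m, ∑ k : ZMod n, (A i j k) ^ 2)

/-- Frobenius norm of a complex third order tensor. -/
def frobC {n ℓ m : ℕ} [NeZero n] (A : Fin ℓ → Fin m → ZMod n → ℂ) : ℝ :=
  Real.sqrt (∑ i : Fin ℓ, ∑ j : Fin m, ∑ k : ZMod n, ‖A i j k‖ ^ 2)

/-- The k-th frontal slice of the mode-3 DFT of a real third order tensor. -/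
def hatSlice {n ℓ m : ℕ} [NeZero n] (A : Fin ℓ → Fin m → ZMod n → ℝ) (k : ZMod n) :
    Matrix (Fin ℓ) (Fin m) ℂ :=
  Matrix.of fun i j => dft (fun t => (A i j t : ℂ)) k

/-- Tubal rank: the maximum of the ranks of the frontal slices of the mode-3 DFT. -/
def trank {n ℓ m : ℕ} [NeZero n] (A : Fin ℓ → Fin m → ZMod n → ℝ) : ℕ :=
  Finset.univ.sup fun k : ZMod n => (hatSlice A k).rank

end

/-- t-product multiplication by an orthogonal tensor preserves the Frobenius norm. -/
theorem frob_tmul_orthogonal {n l m : ℕ} [NeZero n]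
    (Q : Fin l → Fin l → ZMod n → ℝ) (A : Fin l → Fin m → ZMod n → ℝ)
    (hQ : tmul (tT Q) Q = tId n l) :
    frob (tmul Q A) = frob A := by
  have key : ∀ (k k' : Fin l) (u : ZMod n),
      (∑ s : ZMod n, ∑ i : Fin l, Q i k s * Q i k' (u + s))
        = if k = k' ∧ u = 0 then 1 else 0 := by
    intro k k' u
    have h := congrFun (congrFun (congrFun hQ k) k') u
    simp only [tmul, conv, tT, tId] at h
    rw [← h, Finset.sum_comm]
    refine Finset.sum_congr rfl fun i _ => ?_
    refine Fintype.sum_equiv (Equiv.neg (ZMod n)) _ _ fun s => ?_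
    simp [sub_neg_eq_add, add_comm]
  unfold frob
  congr 1
  simp only [tmul, conv]
  calc ∑ i : Fin l, ∑ j : Fin m, ∑ t : ZMod n,
        (∑ k : Fin l, ∑ s : ZMod n, Q i k s * A k j (t - s)) ^ 2
      = ∑ i : Fin l, ∑ j : Fin m, ∑ t : ZMod n, ∑ k : Fin l, ∑ k' : Fin l,
          ∑ s : ZMod n, ∑ s' : ZMod n,
          (Q i k s * A k j (t - s)) * (Q i k' s' * A k' j (t - s')) := by
        refine Finset.sum_congr rfl fun i _ => Finset.sum_congr rfl fun j _ =>
          Finset.sum_congr rfl fun t _ => ?_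
        rw [sq, Finset.sum_mul_sum]
        exact Finset.sum_congr rfl fun k _ => Finset.sum_congr rfl fun k' _ =>
          Finset.sum_mul_sum _ _ _ _
    _ = ∑ j : Fin m, ∑ k : Fin l, ∑ k' : Fin l, ∑ s : ZMod n, ∑ s' : ZMod n,
          ∑ i : Fin l, ∑ t : ZMod n,
          (Q i k s * A k j (t - s)) * (Q i k' s' * A k' j (t - s')) := by
        rw [Finset.sum_comm]
        refine Finset.sum_congr rfl fun j _ => ?_
        conv_lhs => enter [2, i]; rw [Finset.sum_comm]
        rw [Finset.sum_comm]
        refine Finset.sum_congr rfl fun k _ => ?_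
        conv_lhs => enter [2, i]; rw [Finset.sum_comm]
        rw [Finset.sum_comm]
        refine Finset.sum_congr rfl fun k' _ => ?_
        conv_lhs => enter [2, i]; rw [Finset.sum_comm]
        rw [Finset.sum_comm]
        refine Finset.sum_congr rfl fun s _ => ?_
        conv_lhs => enter [2, i]; rw [Finset.sum_comm]
        rw [Finset.sum_comm]
    _ = ∑ j : Fin m, ∑ k : Fin l, ∑ k' : Fin l, ∑ s : ZMod n, ∑ s' : ZMod n,
          (∑ i : Fin l, Q i k s * Q i k' s') *
          (∑ t : ZMod n, A k j (t - s) * A k' j (t - s')) := by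
        refine Finset.sum_congr rfl fun j _ => Finset.sum_congr rfl fun k _ =>
          Finset.sum_congr rfl fun k' _ => Finset.sum_congr rfl fun s _ =>
          Finset.sum_congr rfl fun s' _ => ?_
        rw [Finset.sum_mul_sum]
        exact Finset.sum_congr rfl fun i _ => Finset.sum_congr rfl fun t _ => by ring
    _ = ∑ j : Fin m, ∑ k : Fin l, ∑ k' : Fin l, ∑ u : ZMod n, ∑ s : ZMod n,
          (∑ i : Fin l, Q i k s * Q i k' (u + s)) *
          (∑ t : ZMod n, A k j t * A k' j (t - u)) := by
        refine Finset.sum_congr rfl fun j _ => Finset.sum_congr rfl fun k _ =>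
          Finset.sum_congr rfl fun k' _ => ?_
        refine Eq.trans (Finset.sum_congr rfl fun s _ => ?_) Finset.sum_comm
        refine (Fintype.sum_equiv (Equiv.addRight s)
          (fun u => (∑ i : Fin l, Q i k s * Q i k' (u + s)) *
            (∑ t : ZMod n, A k j t * A k' j (t - u)))
          (fun s' => (∑ i : Fin l, Q i k s * Q i k' s') *
            (∑ t : ZMod n, A k j (t - s) * A k' j (t - s')))
          fun u => ?_).symm
        simp only [Equiv.coe_addRight]
        congr 1
        refine Fintype.sum_equiv (Equiv.subRight s).symm _ _ fun t => ?_
        simp only [Equiv.subRight_symm_apply, Equiv.subRight_apply]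
        have h1 : t + s - s = t := by ring
        have h2 : t + s - (u + s) = t - u := by ring
        rw [h1, h2]
    _ = ∑ j : Fin m, ∑ k : Fin l, ∑ t : ZMod n, (A k j t) ^ 2 := by
        refine Finset.sum_congr rfl fun j _ => Finset.sum_congr rfl fun k _ => ?_
        have h1 : ∀ (k' : Fin l) (u : ZMod n),
            (∑ s : ZMod n, (∑ i : Fin l, Q i k s * Q i k' (u + s)) *
              (∑ t : ZMod n, A k j t * A k' j (t - u)))
            = (if k = k' ∧ u = 0 then 1 else 0) *
              (∑ t : ZMod n, A k j t * A k' j (t - u)) := fun k' u => by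
          rw [← Finset.sum_mul, key]
        calc ∑ k' : Fin l, ∑ u : ZMod n, ∑ s : ZMod n,
              (∑ i : Fin l, Q i k s * Q i k' (u + s)) *
              (∑ t : ZMod n, A k j t * A k' j (t - u))
            = ∑ k' : Fin l, ∑ u : ZMod n, (if k = k' ∧ u = 0 then 1 else 0) *
              (∑ t : ZMod n, A k j t * A k' j (t - u)) := by
              exact Finset.sum_congr rfl fun k' _ => Finset.sum_congr rfl fun u _ => h1 k' u
          _ = ∑ k' : Fin l, if k = k' then ∑ t : ZMod n, A k j t * A k' j t else 0 := by
              refine Finset.sum_congr rfl fun k' _ => ?_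
              by_cases h : k = k'
              · simp [h, Finset.sum_ite_eq', ite_mul]
              · simp [h]
          _ = ∑ t : ZMod n, (A k j t) ^ 2 := by
              simp [Finset.sum_ite_eq, sq]
    _ = ∑ i : Fin l, ∑ j : Fin m, ∑ t : ZMod n, (A i j t) ^ 2 := Finset.sum_comm
end

section
/- Let A ∈ R^{ℓ×m×n} and let Q ∈ R^{ℓ×r×n} be partially orthogonal, Q^T * Q = I_{r×r×n}. Set B̃ = Q^T * A. Then ‖A − Q*B̃‖_F² = ‖A‖_F² − ‖B̃‖_F². -/
open scoped BigOperators
open Finset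

section Aux
variable {n l m r p q : ℕ} [NeZero n]

lemma sum_swap3 {α β γ M : Type*} [Fintype α] [Fintype β] [Fintype γ] [AddCommMonoid M]
    (f : α → β → γ → M) :
    ∑ a : α, ∑ b : β, ∑ c : γ, f a b c = ∑ c : γ, ∑ b : β, ∑ a : α, f a b c :=
  calc ∑ a : α, ∑ b : β, ∑ c : γ, f a b c
      = ∑ a : α, ∑ c : γ, ∑ b : β, f a b c :=
        Finset.sum_congr rfl fun a _ => Finset.sum_comm
    _ = ∑ c : γ, ∑ a : α, ∑ b : β, f a b c := Finset.sum_comm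
    _ = ∑ c : γ, ∑ b : β, ∑ a : α, f a b c :=
        Finset.sum_congr rfl fun c _ => Finset.sum_comm

lemma conv_assoc (a b c : ZMod n → ℝ) : conv a (conv b c) = conv (conv a b) c := by
  funext i
  unfold conv
  simp only [Finset.mul_sum, Finset.sum_mul]
  refine Eq.trans ?_ Finset.sum_comm.symm
  refine Finset.sum_congr rfl fun x _ => ?_
  refine Fintype.sum_equiv (Equiv.addRight x) _ _ fun k => ?_
  show a x * (b k * c (i - x - k)) = a x * b ((k + x) - x) * c (i - (k + x))
  have h1 : k + x - x = k := by ring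
  have h2 : i - (k + x) = i - x - k := by ring
  rw [h1, h2, mul_assoc]

lemma conv_sum_right {ι : Type*} [Fintype ι] (a : ZMod n → ℝ) (f : ι → ZMod n → ℝ) (t : ZMod n) :
    conv a (fun s => ∑ x : ι, f x s) t = ∑ x : ι, conv a (f x) t := by
  unfold conv
  simp only [Finset.mul_sum]
  exact Finset.sum_comm

lemma conv_sum_left {ι : Type*} [Fintype ι] (a : ZMod n → ℝ) (f : ι → ZMod n → ℝ) (t : ZMod n) :
    conv (fun s => ∑ x : ι, f x s) a t = ∑ x : ι, conv (f x) a t := by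
  unfold conv
  simp only [Finset.sum_mul]
  exact Finset.sum_comm

lemma tmul_assoc (A : Fin l → Fin p → ZMod n → ℝ) (B : Fin p → Fin q → ZMod n → ℝ)
    (C : Fin q → Fin m → ZMod n → ℝ) : tmul A (tmul B C) = tmul (tmul A B) C := by
  funext i j t
  show ∑ k : Fin p, conv (A i k) (fun s => ∑ x : Fin q, conv (B k x) (C x j) s) t
      = ∑ x : Fin q, conv (fun s => ∑ k : Fin p, conv (A i k) (B k x) s) (C x j) t
  simp only [conv_sum_right, conv_sum_left, conv_assoc]
  exact Finset.sum_comm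

lemma tId_tmul (B : Fin r → Fin m → ZMod n → ℝ) : tmul (tId n r) B = B := by
  funext i j t
  show ∑ k : Fin r, conv (fun s => if i = k ∧ s = 0 then 1 else 0) (B k j) t = B i j t
  simp only [conv, tId]
  rw [Finset.sum_eq_single i]
  · rw [Finset.sum_eq_single (0 : ZMod n)]
    · simp
    · intro s _ hs
      simp [hs]
    · simp
  · intro k _ hk
    apply Finset.sum_eq_zero
    intro s _
    simp [Ne.symm hk]
  · simp

lemma conv_adjoint (qv b x : ZMod n → ℝ) :
    ∑ t : ZMod n, conv qv b t * x t = ∑ u : ZMod n, b u * conv (fun s => qv (-s)) x u := by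
  unfold conv
  simp only [Finset.sum_mul, Finset.mul_sum]
  refine Finset.sum_comm.trans (Eq.trans ?_ Finset.sum_comm)
  refine Fintype.sum_equiv (Equiv.neg (ZMod n)) _ _ fun s => ?_
  refine Fintype.sum_equiv (Equiv.subRight s) _ _ fun t => ?_
  show qv s * b (t - s) * x t = b (t - s) * (qv (- -s) * x (t - s - -s))
  have h1 : t - s - -s = t := by ring
  rw [h1, neg_neg]; ring

lemma S_adjoint (Q : Fin l → Fin r → ZMod n → ℝ) (B : Fin r → Fin m → ZMod n → ℝ)
    (X : Fin l → Fin m → ZMod n → ℝ) :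
    ∑ i : Fin l, ∑ j : Fin m, ∑ t : ZMod n, tmul Q B i j t * X i j t
      = ∑ a : Fin r, ∑ j : Fin m, ∑ t : ZMod n, B a j t * tmul (tT Q) X a j t := by
  calc ∑ i : Fin l, ∑ j : Fin m, ∑ t : ZMod n, tmul Q B i j t * X i j t
      = ∑ i : Fin l, ∑ j : Fin m, ∑ a : Fin r, ∑ u : ZMod n,
          B a j u * conv (tT Q a i) (X i j) u := by
        refine Finset.sum_congr rfl fun i _ => Finset.sum_congr rfl fun j _ => ?_
        show ∑ t : ZMod n, (∑ a : Fin r, conv (Q i a) (B a j) t) * X i j t = _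
        simp only [Finset.sum_mul]
        rw [Finset.sum_comm]
        exact Finset.sum_congr rfl fun a _ => conv_adjoint (Q i a) (B a j) (X i j)
    _ = ∑ a : Fin r, ∑ j : Fin m, ∑ i : Fin l, ∑ u : ZMod n,
          B a j u * conv (tT Q a i) (X i j) u := sum_swap3 _
    _ = ∑ a : Fin r, ∑ j : Fin m, ∑ u : ZMod n,
          B a j u * ∑ i : Fin l, conv (tT Q a i) (X i j) u := by
        refine Finset.sum_congr rfl fun a _ => Finset.sum_congr rfl fun j _ => ?_
        rw [Finset.sum_comm]
        simp [Finset.mul_sum]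
    _ = _ := rfl

end Aux

/-- Error identity for the projection onto the range of a partially orthogonal tensor:
‖A − Q*B̃‖_F² = ‖A‖_F² − ‖B̃‖_F² where B̃ = Q^T * A. -/
theorem frob_sub_proj_sq {n l m r : ℕ} [NeZero n]
    (A : Fin l → Fin m → ZMod n → ℝ) (Q : Fin l → Fin r → ZMod n → ℝ)
    (hQ : tmul (tT Q) Q = tId n r) :
    frob (fun i j k => A i j k - tmul Q (tmul (tT Q) A) i j k) ^ 2
      = frob A ^ 2 - frob (tmul (tT Q) A) ^ 2 := by
  have key : ∀ (X : Fin l → Fin m → ZMod n → ℝ),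
      frob X ^ 2 = ∑ i : Fin l, ∑ j : Fin m, ∑ k : ZMod n, X i j k ^ 2 := by
    intro X
    exact Real.sq_sqrt (by positivity)
  have keyB : ∀ (X : Fin r → Fin m → ZMod n → ℝ),
      frob X ^ 2 = ∑ i : Fin r, ∑ j : Fin m, ∑ k : ZMod n, X i j k ^ 2 := by
    intro X
    exact Real.sq_sqrt (by positivity)
  set B := tmul (tT Q) A with hB
  have hproj : tmul (tT Q) (tmul Q B) = B := by
    rw [tmul_assoc, hQ, tId_tmul]
  have h1 : ∑ i : Fin l, ∑ j : Fin m, ∑ k : ZMod n, tmul Q B i j k * A i j k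
      = ∑ i : Fin r, ∑ j : Fin m, ∑ k : ZMod n, B i j k * B i j k := by
    rw [S_adjoint, ← hB]
  have h2 : ∑ i : Fin l, ∑ j : Fin m, ∑ k : ZMod n, tmul Q B i j k * tmul Q B i j k
      = ∑ i : Fin r, ∑ j : Fin m, ∑ k : ZMod n, B i j k * B i j k := by
    rw [S_adjoint, hproj]
  rw [key, key, keyB]
  have expand : ∀ i j k, (A i j k - tmul Q B i j k) ^ 2
      = A i j k ^ 2 - 2 * (tmul Q B i j k * A i j k)
        + tmul Q B i j k * tmul Q B i j k := by
    intro i j k; ring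
  simp only [expand]
  simp only [Finset.sum_add_distrib, Finset.sum_sub_distrib, ← Finset.mul_sum]
  rw [h1, h2]
  have hBB : ∑ i : Fin r, ∑ j : Fin m, ∑ k : ZMod n, B i j k * B i j k
      = ∑ i : Fin r, ∑ j : Fin m, ∑ k : ZMod n, B i j k ^ 2 := by
    simp [sq]
  rw [hBB]; ring
end

section
/- (Eckart–Young for the t-product, error formula) Let A ∈ R^{ℓ×m×n} with tSVD A = U*S*V^T and let A_k = Σ_{j=1}^k U(:,j,:) * S(j,j,:) * V(:,j,:)^T. Then ‖A − A_k‖_F² = (1/n) Σ_{i=1}^n Σ_{j=k+1}^{min(ℓ,m)} (σ̂_j^{(i)})², where σ̂_j^{(i)} is the j-th singular value of the i-th frontal slice Â^{(i)} of the mode-3 DFT of A. -/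
open scoped BigOperators
open Finset

set_option linter.unusedSectionVars false
set_option maxHeartbeats 1000000

namespace TsvdAux
open Finset Matrix
noncomputable section

def om (n : ℕ) : ℂ := Complex.exp (-(2 * (Real.pi : ℂ) * Complex.I) / n)

variable {n : ℕ} [NeZero n]

lemma om_zpow (d : ℤ) :
    om n ^ d = Complex.exp ((d : ℂ) * (-(2 * (Real.pi : ℂ) * Complex.I) / n)) :=
  (Complex.exp_int_mul _ d).symm

lemma om_pow (d : ℕ) :
    om n ^ d = Complex.exp ((d : ℂ) * (-(2 * (Real.pi : ℂ) * Complex.I) / n)) :=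
  (Complex.exp_nat_mul _ d).symm

lemma dft_eq (a : ZMod n → ℂ) (k : ZMod n) :
    dft a k = ∑ j : ZMod n, a j * om n ^ (j.val * k.val) := by
  refine Finset.sum_congr rfl fun j _ => ?_
  rw [om_pow]
  congr 1
  push_cast
  ring

lemma om_pow_n : om n ^ n = 1 := by
  rw [om_pow]
  have hn : (n : ℂ) ≠ 0 := Nat.cast_ne_zero.2 (NeZero.ne n)
  rw [show ((n:ℂ)) * (-(2 * (Real.pi:ℂ) * Complex.I) / n)
      = ((-1 : ℤ) : ℂ) * (2 * (Real.pi:ℂ) * Complex.I) by field_simp; ring]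
  exact Complex.exp_int_mul_two_pi_mul_I (-1)

lemma om_zpow_eq_one_iff (d : ℤ) : om n ^ d = 1 ↔ (n : ℤ) ∣ d := by
  rw [om_zpow, Complex.exp_eq_one_iff]
  have hn : (n : ℂ) ≠ 0 := Nat.cast_ne_zero.2 (NeZero.ne n)
  have hπ : (2 * (Real.pi : ℂ) * Complex.I) ≠ 0 := by
    simp [Complex.I_ne_zero, Real.pi_ne_zero, Complex.ofReal_ne_zero]
  constructor
  · rintro ⟨m, hm⟩
    have hm' : (d : ℂ) * (-(2 * (Real.pi:ℂ) * Complex.I)) = m * (2 * (Real.pi:ℂ) * Complex.I) * n := by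
      field_simp at hm
      linear_combination (2 * (Real.pi:ℂ) * Complex.I) * hm
    have h2 : (2 * (Real.pi:ℂ) * Complex.I) * ((d : ℂ) + m * n) = 0 := by
      linear_combination -hm'
    have h3 : (d : ℂ) + m * n = 0 := (mul_eq_zero.mp h2).resolve_left hπ
    have h4 : (d : ℂ) = ((n * -m : ℤ) : ℂ) := by push_cast; linear_combination h3
    exact ⟨-m, by exact_mod_cast h4⟩
  · rintro ⟨m, rfl⟩
    refine ⟨-m, ?_⟩
    field_simp
    simp only [Int.cast_mul, Int.cast_neg, Int.cast_natCast]
    ring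

lemma om_pow_mod (a : ℕ) : om n ^ a = om n ^ (a % n) := by
  conv_lhs => rw [← Nat.div_add_mod a n]
  rw [pow_add, pow_mul, om_pow_n, one_pow, one_mul]

lemma om_pow_congr {a b : ℕ} (h : a ≡ b [MOD n]) : om n ^ a = om n ^ b := by
  rw [om_pow_mod a, om_pow_mod b, h]

lemma om_star : starRingEnd ℂ (om n) = (om n)⁻¹ := by
  rw [om, ← Complex.exp_conj, ← Complex.exp_neg]
  congr 1
  rw [map_div₀, map_neg, _root_.map_mul, _root_.map_mul, Complex.conj_I, Complex.conj_ofReal, map_ofNat, map_natCast]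
  ring

lemma om_star_pow (d : ℕ) : starRingEnd ℂ (om n ^ d) = om n ^ (-(d : ℤ)) := by
  rw [map_pow, om_star, inv_pow, ← zpow_natCast, ← _root_.zpow_neg]

lemma sum_val (f : ℕ → ℂ) : ∑ k : ZMod n, f k.val = ∑ i ∈ Finset.range n, f i := by
  refine Finset.sum_nbij' (fun k => k.val) (fun i => (i : ZMod n)) ?_ ?_ ?_ ?_ ?_
  · intro k _; exact Finset.mem_range.2 (ZMod.val_lt k)
  · intro i _; exact Finset.mem_univ _
  · intro k _; exact ZMod.natCast_rightInverse k
  · intro i hi; exact ZMod.val_cast_of_lt (Finset.mem_range.1 hi)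
  · intro k _; rfl

lemma char_orth (j j' : ZMod n) :
    ∑ k : ZMod n, om n ^ (j.val * k.val) * starRingEnd ℂ (om n ^ (j'.val * k.val))
      = if j = j' then (n : ℂ) else 0 := by
  set d : ℤ := (j.val : ℤ) - j'.val with hd
  have hterm : ∀ k : ZMod n, om n ^ (j.val * k.val) * starRingEnd ℂ (om n ^ (j'.val * k.val))
      = (om n ^ d) ^ k.val := by
    intro k
    rw [om_star_pow, ← zpow_natCast (om n) (j.val * k.val), ← zpow_add₀, ← zpow_natCast (om n ^ d),
      ← _root_.zpow_mul]
    · congr 1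
      push_cast
      ring
    · intro h
      have := om_pow_n (n := n)
      rw [h, zero_pow (NeZero.ne n)] at this
      exact zero_ne_one this
  simp_rw [hterm]
  rw [sum_val (f := fun i => (om n ^ d) ^ i)]
  by_cases hjj : j = j'
  · subst hjj
    simp [hd, om_zpow_eq_one_iff]
  · have hζn : (om n ^ d) ^ n = 1 := by
      rw [← zpow_natCast, ← _root_.zpow_mul, mul_comm, _root_.zpow_mul, zpow_natCast, om_pow_n, _root_.one_zpow]
    have hζ : om n ^ d ≠ 1 := by
      rw [Ne, om_zpow_eq_one_iff]
      intro hdvd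
      apply hjj
      have h1 : (j.val : ℤ) = j'.val := by
        rcases hdvd with ⟨c, hc⟩
        have hj := ZMod.val_lt j
        have hj' := ZMod.val_lt j'
        have hn : 0 < (n:ℤ) := by exact_mod_cast Nat.pos_of_ne_zero (NeZero.ne n)
        rcases lt_trichotomy c 0 with h | h | h
        · nlinarith [hc, (by omega : c ≤ -1)]
        · subst h; simp at hc; omega
        · nlinarith [hc, (by omega : 1 ≤ c)]
      have : j.val = j'.val := by exact_mod_cast h1
      exact ZMod.val_injective n this
    rw [geom_sum_eq hζ, hζn, if_neg hjj]
    simp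

lemma parsevalC (a : ZMod n → ℂ) :
    ∑ k : ZMod n, dft a k * starRingEnd ℂ (dft a k)
      = n * ∑ t : ZMod n, a t * starRingEnd ℂ (a t) := by
  have step : ∀ k : ZMod n, dft a k * starRingEnd ℂ (dft a k)
      = ∑ j : ZMod n, ∑ j' : ZMod n, (a j * starRingEnd ℂ (a j')) *
          (om n ^ (j.val * k.val) * starRingEnd ℂ (om n ^ (j'.val * k.val))) := by
    intro k
    rw [dft_eq, map_sum, Finset.sum_mul_sum]
    refine Finset.sum_congr rfl fun j _ => Finset.sum_congr rfl fun j' _ => ?_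
    rw [_root_.map_mul]
    ring
  simp_rw [step]
  rw [Finset.sum_comm]
  have : ∀ j : ZMod n, ∑ k : ZMod n, ∑ j' : ZMod n, (a j * starRingEnd ℂ (a j')) *
          (om n ^ (j.val * k.val) * starRingEnd ℂ (om n ^ (j'.val * k.val)))
      = (n : ℂ) * (a j * starRingEnd ℂ (a j)) := by
    intro j
    rw [Finset.sum_comm]
    have : ∀ j' : ZMod n, ∑ k : ZMod n, (a j * starRingEnd ℂ (a j')) *
          (om n ^ (j.val * k.val) * starRingEnd ℂ (om n ^ (j'.val * k.val)))
        = (a j * starRingEnd ℂ (a j')) * (if j = j' then (n:ℂ) else 0) := by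
      intro j'
      rw [← Finset.mul_sum, char_orth]
    simp_rw [this, mul_ite, mul_zero]
    rw [Finset.sum_ite_eq]
    simp [mul_comm]
  simp_rw [this]
  rw [← Finset.mul_sum]

lemma parseval (a : ZMod n → ℂ) :
    ∑ k : ZMod n, ‖dft a k‖ ^ 2 = n * ∑ t : ZMod n, ‖a t‖ ^ 2 := by
  have h := parsevalC a
  simp_rw [Complex.mul_conj, ← Complex.sq_norm] at h
  exact_mod_cast h

lemma om_ne_zero : om n ≠ 0 := Complex.exp_ne_zero _

lemma char_add (j s k : ZMod n) :
    om n ^ ((j + s).val * k.val) = om n ^ (j.val * k.val) * om n ^ (s.val * k.val) := by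
  rw [← pow_add]
  apply om_pow_congr
  calc (j + s).val * k.val ≡ (j.val + s.val) * k.val [MOD n] := by
        rw [ZMod.val_add]; exact (Nat.mod_modEq _ n).mul_right _
    _ = j.val * k.val + s.val * k.val := add_mul _ _ _

lemma char_neg (s k : ZMod n) :
    om n ^ ((-s).val * k.val) = (om n ^ (s.val * k.val))⁻¹ := by
  have h := char_add s (-s) k
  rw [add_neg_cancel] at h
  have h0 : ((0 : ZMod n)).val = 0 := ZMod.val_zero
  rw [h0, zero_mul, pow_zero] at h
  first
  | exact eq_inv_of_mul_eq_one_left h.symm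
  | exact eq_inv_of_mul_eq_one_right h.symm

lemma conj_char (s k : ZMod n) :
    starRingEnd ℂ (om n ^ (s.val * k.val)) = (om n ^ (s.val * k.val))⁻¹ := by
  rw [om_star_pow, _root_.zpow_neg, zpow_natCast]

lemma dft_conv (a b : ZMod n → ℝ) (k : ZMod n) :
    dft (fun t => ((conv a b t : ℝ) : ℂ)) k
      = dft (fun t => (a t : ℂ)) k * dft (fun t => (b t : ℂ)) k := by
  simp only [conv]
  push_cast
  rw [dft_eq, dft_eq, dft_eq, Finset.sum_mul_sum]
  simp_rw [Finset.sum_mul]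
  rw [Finset.sum_comm]
  refine Finset.sum_congr rfl fun j _ => ?_
  rw [← Equiv.sum_comp (Equiv.addRight j)
    (fun t => ((a j : ℂ) * (b (t - j) : ℂ)) * om n ^ (t.val * k.val))]
  refine Finset.sum_congr rfl fun s _ => ?_
  simp only [Equiv.coe_addRight, add_sub_cancel_right]
  rw [char_add s j k]
  ring

lemma dft_neg (c : ZMod n → ℝ) (k : ZMod n) :
    dft (fun t => ((c (-t) : ℝ) : ℂ)) k = starRingEnd ℂ (dft (fun t => (c t : ℂ)) k) := by
  rw [dft_eq, dft_eq, map_sum]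
  rw [← Equiv.sum_comp (Equiv.neg (ZMod n))
    (fun t => ((c (-t) : ℝ) : ℂ) * om n ^ (t.val * k.val))]
  refine Finset.sum_congr rfl fun s _ => ?_
  simp only [Equiv.neg_apply, neg_neg]
  rw [_root_.map_mul, Complex.conj_ofReal, conj_char, char_neg]

lemma dft_sum {ι : Type*} (s : Finset ι) (f : ι → ZMod n → ℂ) (k : ZMod n) :
    dft (fun t => ∑ p ∈ s, f p t) k = ∑ p ∈ s, dft (f p) k := by
  simp only [dft, Finset.sum_mul]
  rw [Finset.sum_comm]

lemma dft_sub (f g : ZMod n → ℂ) (k : ZMod n) :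
    dft (fun t => f t - g t) k = dft f k - dft g k := by
  simp [dft, sub_mul, Finset.sum_sub_distrib]

lemma hatSlice_tmul {ℓ p m : ℕ} (A : Fin ℓ → Fin p → ZMod n → ℝ)
    (B : Fin p → Fin m → ZMod n → ℝ) (i : ZMod n) :
    hatSlice (tmul A B) i = hatSlice A i * hatSlice B i := by
  ext a b
  rw [Matrix.mul_apply]
  show dft (fun t => ((tmul A B a b t : ℝ) : ℂ)) i = _
  have : (fun t => ((tmul A B a b t : ℝ) : ℂ))
      = fun t => ∑ q : Fin p, ((conv (A a q) (B q b) t : ℝ) : ℂ) := by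
    funext t; simp [tmul]
  rw [this, dft_sum]
  exact Finset.sum_congr rfl fun q _ => dft_conv _ _ _

lemma hatSlice_tT {ℓ m : ℕ} (A : Fin ℓ → Fin m → ZMod n → ℝ) (i : ZMod n) :
    hatSlice (tT A) i = (hatSlice A i)ᴴ := by
  ext b a
  rw [Matrix.conjTranspose_apply]
  exact dft_neg (A a b) i

lemma hatSlice_tId (m : ℕ) (i : ZMod n) : hatSlice (tId n m) i = 1 := by
  ext a b
  show dft (fun t => ((tId n m a b t : ℝ) : ℂ)) i = _
  rw [dft_eq]
  simp only [tId]
  rcases eq_or_ne a b with rfl | hab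
  · rw [Finset.sum_eq_single (0 : ZMod n)]
    · simp [ZMod.val_zero, Matrix.one_apply]
    · intro t _ ht; simp [ht]
    · intro h; exact absurd (Finset.mem_univ _) h
  · simp [hab, Matrix.one_apply]

lemma frob_sq {ℓ m : ℕ} (A : Fin ℓ → Fin m → ZMod n → ℝ) :
    frob A ^ 2
      = (1 / n) * ∑ i : ZMod n, ∑ a : Fin ℓ, ∑ b : Fin m, ‖hatSlice A i a b‖ ^ 2 := by
  have hnn : (n : ℝ) ≠ 0 := Nat.cast_ne_zero.2 (NeZero.ne n)
  have key : ∀ (a : Fin ℓ) (b : Fin m), ∑ i : ZMod n, ‖hatSlice A i a b‖ ^ 2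
      = (n : ℝ) * ∑ t : ZMod n, (A a b t) ^ 2 := by
    intro a b
    have := parseval (fun t => ((A a b t : ℝ) : ℂ))
    simpa [Complex.norm_real, sq_abs, hatSlice] using this
  have swap : ∑ i : ZMod n, ∑ a : Fin ℓ, ∑ b : Fin m, ‖hatSlice A i a b‖ ^ 2
      = ∑ a : Fin ℓ, ∑ b : Fin m, ∑ i : ZMod n, ‖hatSlice A i a b‖ ^ 2 := by
    rw [Finset.sum_comm]
    exact Finset.sum_congr rfl fun a _ => Finset.sum_comm
  rw [swap]
  simp_rw [key, ← Finset.mul_sum]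
  rw [frob, Real.sq_sqrt (by positivity)]
  field_simp

lemma trace_form {ℓ m : ℕ} (N : Matrix (Fin ℓ) (Fin m) ℂ) :
    (Nᴴ * N).trace = ∑ a : Fin ℓ, ∑ b : Fin m, ((‖N a b‖ ^ 2 : ℝ) : ℂ) := by
  rw [Matrix.trace]
  simp only [Matrix.diag_apply, Matrix.mul_apply, Matrix.conjTranspose_apply]
  rw [Finset.sum_comm]
  refine Finset.sum_congr rfl fun a _ => Finset.sum_congr rfl fun b _ => ?_
  rw [mul_comm, show star (N a b) = starRingEnd ℂ (N a b) from rfl, Complex.mul_conj]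
  norm_cast
  rw [Complex.sq_norm]

lemma frob_conj {ℓ m : ℕ} (P : Matrix (Fin ℓ) (Fin ℓ) ℂ) (M : Matrix (Fin ℓ) (Fin m) ℂ)
    (Q : Matrix (Fin m) (Fin m) ℂ) (hP : Pᴴ * P = 1) (hQ : Q * Qᴴ = 1) :
    ∑ a : Fin ℓ, ∑ b : Fin m, ‖(P * M * Q) a b‖ ^ 2
      = ∑ a : Fin ℓ, ∑ b : Fin m, ‖M a b‖ ^ 2 := by
  have hmat : (P * M * Q)ᴴ * (P * M * Q) = Qᴴ * (Mᴴ * M) * Q := by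
    rw [Matrix.conjTranspose_mul, Matrix.conjTranspose_mul]
    calc Qᴴ * (Mᴴ * Pᴴ) * (P * M * Q)
        = Qᴴ * (Mᴴ * ((Pᴴ * P) * M)) * Q := by simp only [Matrix.mul_assoc]
      _ = Qᴴ * (Mᴴ * M) * Q := by rw [hP, Matrix.one_mul]
  have htr : ((P * M * Q)ᴴ * (P * M * Q)).trace = (Mᴴ * M).trace := by
    rw [hmat, Matrix.trace_mul_comm (Qᴴ * (Mᴴ * M)) Q, ← Matrix.mul_assoc, hQ, Matrix.one_mul]
  rw [trace_form, trace_form] at htr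
  exact_mod_cast htr

end
end TsvdAux

open TsvdAux Matrix in
set_option maxHeartbeats 1000000 in
/-- Eckart–Young error formula for the truncated tSVD:
‖A − A_k‖_F² = (1/n) Σ_i Σ_{j=k+1}^{min(ℓ,m)} (σ̂_j^{(i)})². -/
theorem tsvd_truncation_error {l m n : ℕ} [NeZero n] (k : ℕ)
    (A : Fin l → Fin m → ZMod n → ℝ)
    (U : Fin l → Fin l → ZMod n → ℝ) (S : Fin l → Fin m → ZMod n → ℝ)
    (V : Fin m → Fin m → ZMod n → ℝ) (σ : ZMod n → ℕ → ℝ)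
    (hA : A = tmul (tmul U S) (tT V))
    (hU1 : tmul (tT U) U = tId n l) (hU2 : tmul U (tT U) = tId n l)
    (hV1 : tmul (tT V) V = tId n m) (hV2 : tmul V (tT V) = tId n m)
    (hS : ∀ (i : ZMod n) (a : Fin l) (b : Fin m),
      hatSlice S i a b = if (a : ℕ) = (b : ℕ) then (σ i (a : ℕ) : ℂ) else 0)
    (hσnonneg : ∀ i j, 0 ≤ σ i j)
    (hσmono : ∀ i, ∀ j j' : ℕ, j ≤ j' → σ i j' ≤ σ i j) :
    frob (fun i j t => A i j t -
        tmul (tmul U (fun a b t => if (a : ℕ) < k then S a b t else 0)) (tT V) i j t) ^ 2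
      = (1 / n) * ∑ i : ZMod n, ∑ j ∈ Finset.Ico k (min l m), σ i j ^ 2 := by
  classical
  set T : Fin l → Fin m → ZMod n → ℝ := fun a b t => if (a : ℕ) < k then S a b t else 0 with hT
  set B : Fin l → Fin m → ZMod n → ℝ :=
    fun i j t => A i j t - tmul (tmul U T) (tT V) i j t with hB
  have hBhat : ∀ i : ZMod n,
      hatSlice B i = hatSlice U i * (hatSlice S i - hatSlice T i) * (hatSlice V i)ᴴ := by
    intro i
    have hsub : hatSlice B i = hatSlice A i - hatSlice (tmul (tmul U T) (tT V)) i := by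
      ext a b
      show dft (fun t => ((A a b t - tmul (tmul U T) (tT V) a b t : ℝ) : ℂ)) i = _
      have hfe : (fun t => ((A a b t - tmul (tmul U T) (tT V) a b t : ℝ) : ℂ))
          = fun t => ((A a b t : ℝ) : ℂ) - ((tmul (tmul U T) (tT V) a b t : ℝ) : ℂ) := by
        funext t; push_cast; ring
      rw [hfe, dft_sub]
      rfl
    rw [hsub, hA, hatSlice_tmul, hatSlice_tmul, hatSlice_tT, hatSlice_tmul, hatSlice_tmul,
      hatSlice_tT, ← Matrix.sub_mul, ← Matrix.mul_sub]
  have hThat : ∀ (i : ZMod n) (a : Fin l) (b : Fin m),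
      hatSlice T i a b = if (a : ℕ) < k then hatSlice S i a b else 0 := by
    intro i a b
    show dft (fun t => ((T a b t : ℝ) : ℂ)) i = _
    by_cases h : (a : ℕ) < k
    · simp only [hT, h, if_true]
      rfl
    · simp only [hT, h, if_false]
      simp [dft]
  have hD : ∀ (i : ZMod n) (a : Fin l) (b : Fin m), (hatSlice S i - hatSlice T i) a b
      = if (a : ℕ) < k then 0 else (if (a : ℕ) = (b : ℕ) then (σ i (a : ℕ) : ℂ) else 0) := by
    intro i a b
    rw [Matrix.sub_apply, hThat, hS]
    by_cases h : (a : ℕ) < k <;> simp [h]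
  have hPU : ∀ i : ZMod n, (hatSlice U i)ᴴ * hatSlice U i = 1 := by
    intro i
    have h := congrArg (fun X => hatSlice X i) hU1
    simpa only [hatSlice_tmul, hatSlice_tT, hatSlice_tId] using h
  have hQV : ∀ i : ZMod n, (hatSlice V i)ᴴ * hatSlice V i = 1 := by
    intro i
    have h := congrArg (fun X => hatSlice X i) hV1
    simpa only [hatSlice_tmul, hatSlice_tT, hatSlice_tId] using h
  have hslice : ∀ i : ZMod n, ∑ a : Fin l, ∑ b : Fin m, ‖hatSlice B i a b‖ ^ 2
      = ∑ j ∈ Finset.Ico k (min l m), σ i j ^ 2 := by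
    intro i
    have h1 : ∑ a : Fin l, ∑ b : Fin m, ‖hatSlice B i a b‖ ^ 2
        = ∑ a : Fin l, ∑ b : Fin m,
            ‖(hatSlice S i - hatSlice T i) a b‖ ^ 2 := by
      simp_rw [hBhat i]
      exact frob_conj _ _ _ (hPU i)
        (by rw [Matrix.conjTranspose_conjTranspose]; exact hQV i)
    rw [h1]
    have h2 : ∀ a : Fin l, ∑ b : Fin m, ‖(hatSlice S i - hatSlice T i) a b‖ ^ 2
        = if k ≤ (a : ℕ) ∧ (a : ℕ) < m then σ i (a : ℕ) ^ 2 else 0 := by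
      intro a
      by_cases hak : (a : ℕ) < k
      · have : ¬ (k ≤ (a : ℕ) ∧ (a : ℕ) < m) := by omega
        simp [hD, hak, this]
      · simp only [hD, hak, if_false]
        have habs : ∀ b : Fin m,
            ‖if (a : ℕ) = (b : ℕ) then (σ i (a : ℕ) : ℂ) else 0‖ ^ 2
            = if (a : ℕ) = (b : ℕ) then σ i (a : ℕ) ^ 2 else 0 := by
          intro b
          split <;> simp [Complex.norm_real, sq_abs]
        simp_rw [habs]
        rw [Fin.sum_univ_eq_sum_range (fun j => if (a : ℕ) = j then σ i (a : ℕ) ^ 2 else 0) m,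
          Finset.sum_ite_eq (Finset.range m)]
        simp only [Finset.mem_range]
        split_ifs with h1' h2' <;> first | rfl | omega
    simp_rw [h2]
    rw [Fin.sum_univ_eq_sum_range (fun j => if k ≤ j ∧ j < m then σ i j ^ 2 else 0) l]
    have h3 : ∀ j ∈ Finset.range l, (if k ≤ j ∧ j < m then σ i j ^ 2 else 0)
        = if j ∈ Finset.Ico k (min l m) then σ i j ^ 2 else 0 := by
      intro j hj
      rw [Finset.mem_range] at hj
      simp only [Finset.mem_Ico]
      split_ifs with h1' h2' <;> first | rfl | omega
    rw [Finset.sum_congr rfl h3, Finset.sum_ite_mem,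
      Finset.inter_eq_right.2 (by
        intro j hj
        rw [Finset.mem_Ico] at hj
        rw [Finset.mem_range]
        omega)]
  rw [frob_sq]
  congr 1
  exact Finset.sum_congr rfl fun i _ => hslice i
end

section
/- (Eckart–Young for the t-product, optimality) With the notation above, A_k minimizes ‖A − Ã‖_F over all Ã of the form Ã = X * Y with X ∈ R^{ℓ×k×n}, Y ∈ R^{k×m×n}; i.e., ‖A − A_k‖_F ≤ ‖A − X*Y‖_F for all such X, Y. -/
open scoped BigOperators
open Finset

set_option linter.unusedSectionVars false
set_option linter.unusedVariables false

noncomputable section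

namespace TSVD



variable {n : ℕ} [NeZero n]

def E (n : ℕ) (x : ℤ) : ℂ := Complex.exp (-(2 * Real.pi * Complex.I * x) / n)

lemma E_add (x y : ℤ) : E n (x + y) = E n x * E n y := by
  rw [E, E, E, ← Complex.exp_add]; congr 1; push_cast; ring

lemma E_zero : E n 0 = 1 := by simp [E]

lemma E_nmul (x : ℤ) : E n ((n : ℤ) * x) = 1 := by
  have hn : (n : ℂ) ≠ 0 := Nat.cast_ne_zero.2 (NeZero.ne n)
  rw [E]
  have : (-(2 * (Real.pi:ℂ) * Complex.I * ((n:ℤ) * x : ℤ)) / n) = (-x : ℤ) * (2 * Real.pi * Complex.I) := by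
    push_cast; field_simp
  rw [this, Complex.exp_int_mul_two_pi_mul_I]

lemma E_congr {x y : ℤ} (h : (x : ZMod n) = (y : ZMod n)) : E n x = E n y := by
  rw [ZMod.intCast_eq_intCast_iff] at h
  obtain ⟨t, ht⟩ := h.dvd
  have : y = x + (n : ℤ) * t := by linarith
  rw [this, E_add, E_nmul, mul_one]

def Ez (n : ℕ) [NeZero n] (a : ZMod n) : ℂ := E n (a.val : ℤ)

lemma natCast_val (a : ZMod n) : ((a.val : ℕ) : ZMod n) = a := ZMod.natCast_rightInverse a

lemma intCast_val (a : ZMod n) : (((a.val : ℤ)) : ZMod n) = a := by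
  rw [Int.cast_natCast, natCast_val]

lemma Ez_intCast (x : ℤ) : Ez n ((x : ZMod n)) = E n x := by
  apply E_congr; rw [intCast_val]

lemma Ez_add (a b : ZMod n) : Ez n (a + b) = Ez n a * Ez n b := by
  rw [show a + b = (((a.val : ℤ) + (b.val : ℤ) : ℤ) : ZMod n) by
    push_cast; rw [natCast_val, natCast_val]]
  rw [Ez_intCast, E_add, Ez, Ez]

lemma Ez_zero : Ez n 0 = 1 := by
  rw [Ez]; simp [E_zero]

lemma conj_E (x : ℤ) : (starRingEnd ℂ) (E n x) = E n (-x) := by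
  rw [E, E, ← Complex.exp_conj]
  congr 1
  simp [map_div₀, map_ofNat, Complex.conj_I, Complex.conj_ofReal]

lemma conj_Ez (a : ZMod n) : (starRingEnd ℂ) (Ez n a) = Ez n (-a) := by
  rw [Ez, conj_E]
  rw [show (-a) = (((-(a.val : ℤ)) : ℤ) : ZMod n) by push_cast; rw [natCast_val]]
  rw [Ez_intCast]

lemma Ez_pow (a : ZMod n) (t : ℕ) : Ez n a ^ t = E n ((a.val : ℤ) * t) := by
  induction t with
  | zero => simp [E_zero]
  | succ t ih =>
      rw [pow_succ, ih, Ez, ← E_add]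
      congr 1

lemma Ez_ne_one {a : ZMod n} (ha : a ≠ 0) : Ez n a ≠ 1 := by
  intro h
  rw [Ez, E, Complex.exp_eq_one_iff] at h
  obtain ⟨t, ht⟩ := h
  have hn : (n : ℂ) ≠ 0 := Nat.cast_ne_zero.2 (NeZero.ne n)
  have hpi : (Real.pi : ℂ) ≠ 0 := by exact_mod_cast Real.pi_ne_zero
  have h3 : (2 : ℂ) * Real.pi * Complex.I ≠ 0 := by
    simp [Complex.I_ne_zero, hpi]
  have ht' : -(2 * (Real.pi:ℂ) * Complex.I * ((a.val : ℤ) : ℂ)) = t * (2 * Real.pi * Complex.I) * n := by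
    rw [div_eq_iff hn] at ht
    linear_combination ht
  have h4 : (2 * (Real.pi:ℂ) * Complex.I) * ((a.val : ℤ) : ℂ) = (2 * Real.pi * Complex.I) * (((-t * n : ℤ)) : ℂ) := by
    push_cast
    linear_combination -ht'
  have h5 : ((a.val : ℤ) : ℂ) = (((-t * n : ℤ)) : ℂ) := mul_left_cancel₀ h3 h4
  have h6 : (a.val : ℤ) = -t * n := by exact_mod_cast h5
  have h7 : (n : ℤ) ∣ (a.val : ℤ) := ⟨-t, by linarith⟩
  have h8 : n ∣ a.val := Int.ofNat_dvd.mp (by simpa using h7)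
  have h9 : a.val ≠ 0 := fun h => ha (by rwa [← ZMod.val_eq_zero])
  have := Nat.le_of_dvd (Nat.pos_of_ne_zero h9) h8
  have := a.val_lt
  omega

lemma sum_val (f : ℕ → ℂ) : ∑ k : ZMod n, f (ZMod.val k) = ∑ t ∈ range n, f t := by
  refine Finset.sum_nbij' (i := fun k => ZMod.val k) (j := fun t => (t : ZMod n)) ?_ ?_ ?_ ?_ ?_
  · intro a _; exact Finset.mem_range.2 a.val_lt
  · intro t _; exact Finset.mem_univ _
  · intro a _; exact natCast_val a
  · intro t ht; exact ZMod.val_cast_of_lt (Finset.mem_range.1 ht)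
  · intro a _; rfl

lemma Ez_orth (d : ZMod n) : ∑ k : ZMod n, Ez n (d * k) = if d = 0 then (n : ℂ) else 0 := by
  have key : ∀ k : ZMod n, Ez n (d * k) = Ez n d ^ (ZMod.val k) := by
    intro k
    rw [Ez_pow]
    rw [show d * k = (((d.val : ℤ) * (k.val : ℤ) : ℤ) : ZMod n) by push_cast; rw [natCast_val, natCast_val]]
    rw [Ez_intCast]
  rw [Finset.sum_congr rfl (fun k _ => key k)]
  rw [sum_val (f := fun t => Ez n d ^ t)]
  by_cases hd : d = 0
  · simp [hd, Ez_zero]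
  · rw [geom_sum_eq (Ez_ne_one hd)]
    have : Ez n d ^ n = 1 := by
      rw [Ez_pow, show ((d.val : ℤ) * n) = (n : ℤ) * d.val by ring, E_nmul]
    simp [this, hd]




lemma Ez_mul_val (j k : ZMod n) : Ez n (j * k) = E n ((j.val : ℤ) * k.val) := by
  rw [show j * k = (((j.val : ℤ) * (k.val : ℤ) : ℤ) : ZMod n) by push_cast; rw [natCast_val, natCast_val]]
  rw [Ez_intCast]

lemma dft_eq (a : ZMod n → ℂ) (k : ZMod n) : dft a k = ∑ j : ZMod n, a j * Ez n (j * k) := by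
  unfold dft
  refine Finset.sum_congr rfl fun j _ => ?_
  rw [Ez_mul_val, E]
  congr 1
  push_cast
  ring

lemma dft_convC (a b : ZMod n → ℂ) (k : ZMod n) :
    dft (convC a b) k = dft a k * dft b k := by
  rw [dft_eq, dft_eq, dft_eq]
  unfold convC
  calc ∑ i : ZMod n, (∑ j : ZMod n, a j * b (i - j)) * Ez n (i*k)
      = ∑ i : ZMod n, ∑ j : ZMod n, a j * b (i - j) * Ez n (i*k) := by
        refine Finset.sum_congr rfl fun i _ => ?_; rw [Finset.sum_mul]
    _ = ∑ j : ZMod n, ∑ i : ZMod n, a j * b (i - j) * Ez n (i*k) := Finset.sum_comm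
    _ = ∑ j : ZMod n, ∑ s : ZMod n, a j * b s * Ez n ((s+j)*k) := by
        refine Finset.sum_congr rfl fun j _ => ?_
        rw [← Equiv.sum_comp (Equiv.addRight j) (fun i => a j * b (i - j) * Ez n (i*k))]
        simp
    _ = ∑ j : ZMod n, a j * Ez n (j*k) * ∑ s : ZMod n, b s * Ez n (s*k) := by
        refine Finset.sum_congr rfl fun j _ => ?_
        rw [Finset.mul_sum]
        refine Finset.sum_congr rfl fun s _ => ?_
        rw [show (s+j)*k = s*k + j*k by ring, Ez_add]
        ring
    _ = (∑ j : ZMod n, a j * Ez n (j*k)) * ∑ s : ZMod n, b s * Ez n (s*k) := by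
        rw [Finset.sum_mul]

lemma parseval (a : ZMod n → ℂ) :
    ∑ f : ZMod n, ‖dft a f‖^2 = n * ∑ t : ZMod n, ‖a t‖^2 := by
  have key : ∑ f : ZMod n, (dft a f * (starRingEnd ℂ) (dft a f))
      = (n : ℂ) * ∑ t : ZMod n, (a t * (starRingEnd ℂ) (a t)) := by
    calc ∑ f : ZMod n, (dft a f * (starRingEnd ℂ) (dft a f))
        = ∑ f : ZMod n, ∑ j : ZMod n, ∑ j' : ZMod n,
            (a j * Ez n (j*f)) * ((starRingEnd ℂ) (a j') * Ez n (-(j'*f))) := by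
          refine Finset.sum_congr rfl fun f _ => ?_
          rw [dft_eq, map_sum, Finset.sum_mul_sum]
          refine Finset.sum_congr rfl fun j _ => Finset.sum_congr rfl fun j' _ => ?_
          rw [map_mul, conj_Ez]
      _ = ∑ j : ZMod n, ∑ j' : ZMod n, ∑ f : ZMod n,
            (a j * Ez n (j*f)) * ((starRingEnd ℂ) (a j') * Ez n (-(j'*f))) := by
          rw [Finset.sum_comm]
          exact Finset.sum_congr rfl fun j _ => Finset.sum_comm
      _ = ∑ j : ZMod n, ∑ j' : ZMod n, (a j * (starRingEnd ℂ) (a j')) * ∑ f : ZMod n, Ez n ((j - j')*f) := by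
          refine Finset.sum_congr rfl fun j _ => Finset.sum_congr rfl fun j' _ => ?_
          rw [Finset.mul_sum]
          refine Finset.sum_congr rfl fun f _ => ?_
          rw [show (j - j')*f = j*f + -(j'*f) by ring, Ez_add]
          ring
      _ = ∑ j : ZMod n, (a j * (starRingEnd ℂ) (a j)) * n := by
          refine Finset.sum_congr rfl fun j _ => ?_
          rw [Finset.sum_congr rfl (fun j' _ => by rw [Ez_orth])]
          simp only [sub_eq_zero, mul_ite, mul_zero]
          rw [Finset.sum_ite_eq Finset.univ j (fun j' => a j * (starRingEnd ℂ) (a j') * n)]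
          simp
      _ = (n : ℂ) * ∑ t : ZMod n, (a t * (starRingEnd ℂ) (a t)) := by
          rw [Finset.mul_sum]
          exact Finset.sum_congr rfl fun t _ => by ring
  have key2 : ∑ f : ZMod n, ((Complex.normSq (dft a f) : ℝ) : ℂ)
      = (n : ℂ) * ∑ t : ZMod n, ((Complex.normSq (a t) : ℝ) : ℂ) := by
    simpa only [Complex.mul_conj] using key
  have key3 : ∑ f : ZMod n, Complex.normSq (dft a f) = (n : ℝ) * ∑ t : ZMod n, Complex.normSq (a t) := by
    exact_mod_cast key2
  simpa only [Complex.sq_norm] using key3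


section EN
open Matrix

def en {a b : ℕ} (M : Matrix (Fin a) (Fin b) ℂ) : ℝ := ∑ i, ∑ j, ‖M i j‖^2

lemma en_nonneg {a b : ℕ} (M : Matrix (Fin a) (Fin b) ℂ) : 0 ≤ en M :=
  Finset.sum_nonneg fun i _ => Finset.sum_nonneg fun j _ => sq_nonneg _

lemma trace_eq_en {a b : ℕ} (M : Matrix (Fin a) (Fin b) ℂ) :
    Matrix.trace (Mᴴ * M) = (en M : ℂ) := by
  have h1 : Matrix.trace (Mᴴ * M) = ∑ j : Fin b, ∑ i : Fin a, ((‖M i j‖ : ℝ)^2 : ℝ) := by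
    rw [Matrix.trace]
    push_cast
    refine Finset.sum_congr rfl fun j _ => ?_
    rw [Matrix.diag_apply, Matrix.mul_apply]
    refine Finset.sum_congr rfl fun i _ => ?_
    rw [Matrix.conjTranspose_apply, mul_comm,
      show (star (M i j) : ℂ) = (starRingEnd ℂ) (M i j) from rfl, Complex.mul_conj,
      ← Complex.sq_norm]
    push_cast
    ring
  rw [h1, Finset.sum_comm]
  unfold en
  push_cast
  rfl

lemma en_unitary_left {a b c : ℕ} (U : Matrix (Fin c) (Fin a) ℂ) (hU : Uᴴ * U = 1)
    (M : Matrix (Fin a) (Fin b) ℂ) : en (U * M) = en M := by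
  have : ((en (U * M) : ℝ) : ℂ) = ((en M : ℝ) : ℂ) := by
    rw [← trace_eq_en, ← trace_eq_en, Matrix.conjTranspose_mul,
      Matrix.mul_assoc, ← Matrix.mul_assoc Uᴴ U M, hU, Matrix.one_mul]
  exact_mod_cast this

lemma en_unitary_right {a b c : ℕ} (W : Matrix (Fin b) (Fin c) ℂ) (hW : W * Wᴴ = 1)
    (M : Matrix (Fin a) (Fin b) ℂ) : en (M * W) = en M := by
  have : ((en (M * W) : ℝ) : ℂ) = ((en M : ℝ) : ℂ) := by
    rw [← trace_eq_en, ← trace_eq_en, Matrix.conjTranspose_mul]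
    rw [Matrix.mul_assoc Wᴴ Mᴴ (M * W), Matrix.trace_mul_comm]
    rw [← Matrix.mul_assoc Mᴴ M W, Matrix.mul_assoc (Mᴴ * M) W Wᴴ, hW, Matrix.mul_one]
  exact_mod_cast this

lemma en_mul_isometry_le {a b d : ℕ} (Q : Matrix (Fin b) (Fin d) ℂ) (hQ : Qᴴ * Q = 1)
    (M : Matrix (Fin a) (Fin b) ℂ) : en (M * Q) ≤ en M := by
  set P : Matrix (Fin b) (Fin b) ℂ := Q * Qᴴ with hP
  have hPH : Pᴴ = P := by rw [hP, Matrix.conjTranspose_mul, Matrix.conjTranspose_conjTranspose]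
  have hPP : P * P = P := by
    rw [hP, Matrix.mul_assoc, ← Matrix.mul_assoc Qᴴ Q Qᴴ, hQ, Matrix.one_mul]
  have h1 : Matrix.trace ((M * Q)ᴴ * (M * Q)) = Matrix.trace (Mᴴ * M * P) := by
    rw [Matrix.conjTranspose_mul, Matrix.mul_assoc Qᴴ Mᴴ (M * Q), Matrix.trace_mul_comm]
    rw [hP]
    rw [← Matrix.mul_assoc, ← Matrix.mul_assoc]
  have h2 : Matrix.trace ((M * (1 - P))ᴴ * (M * (1 - P))) = Matrix.trace (Mᴴ * M * (1 - P)) := by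
    rw [Matrix.conjTranspose_mul, Matrix.mul_assoc (1 - P)ᴴ Mᴴ (M * (1 - P)), Matrix.trace_mul_comm]
    have h3 : (1 - P) * (1 - P)ᴴ = 1 - P := by
      rw [Matrix.conjTranspose_sub, Matrix.conjTranspose_one, hPH]
      rw [Matrix.sub_mul, Matrix.mul_sub, Matrix.mul_sub, hPP]
      simp
    rw [← Matrix.mul_assoc Mᴴ M (1 - P), Matrix.mul_assoc (Mᴴ * M) (1 - P) (1 - P)ᴴ, h3]
  have hsplit : en M = en (M * Q) + en (M * (1 - P)) := by
    have : ((en M : ℝ) : ℂ) = ((en (M * Q) + en (M * (1 - P)) : ℝ) : ℂ) := by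
      push_cast
      rw [← trace_eq_en, ← trace_eq_en, ← trace_eq_en, h1, h2]
      rw [← Matrix.trace_add, ← Matrix.mul_add]
      congr 1
      simp
    exact_mod_cast this
  linarith [en_nonneg (M * (1 - P))]

end EN

section Core
open Matrix

lemma comb {l m k : ℕ} (s pn : ℕ → ℝ) (hs0 : ∀ j, 0 ≤ s j) (hsm : ∀ i j, i ≤ j → s j ≤ s i)
    (hp0 : ∀ v, 0 ≤ pn v) (hp1 : ∀ v, pn v ≤ 1) (hpm : ∀ v, m ≤ v → pn v = 0)
    (hsum : (m : ℝ) - k ≤ ∑ v ∈ range m, pn v) :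
    (∑ v ∈ range l, if v < m ∧ k ≤ v then s v ^ 2 else 0) ≤ ∑ v ∈ range l, s v ^ 2 * pn v := by
  have hRHS0 : (0:ℝ) ≤ ∑ v ∈ range l, s v ^ 2 * pn v :=
    Finset.sum_nonneg fun v _ => mul_nonneg (sq_nonneg _) (hp0 v)
  by_cases hkl : l ≤ k ∨ m ≤ k
  · have : (∑ v ∈ range l, if v < m ∧ k ≤ v then s v ^ 2 else 0) = 0 := by
      refine Finset.sum_eq_zero fun v hv => ?_
      rw [Finset.mem_range] at hv
      rw [if_neg]
      rintro ⟨h1, h2⟩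
      rcases hkl with h | h <;> omega
    rw [this]; exact hRHS0
  push_neg at hkl
  obtain ⟨hkl, hkm⟩ := hkl
  set G : ℕ → ℝ := fun v => if v < l then s v ^ 2 else 0 with hG
  have hG0 : ∀ v, 0 ≤ G v := fun v => by
    rw [hG]; dsimp only; split <;> [exact sq_nonneg _; exact le_refl 0]
  have hGc : ∀ v, k ≤ v → G v ≤ s k ^ 2 := by
    intro v hv
    rw [hG]; dsimp only
    split
    · exact pow_le_pow_left₀ (hs0 v) (hsm k v hv) 2
    · exact sq_nonneg _
  have hGg : ∀ v, v < k → s k ^ 2 ≤ G v := by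
    intro v hv
    rw [hG]; dsimp only
    rw [if_pos (by omega)]
    exact pow_le_pow_left₀ (hs0 k) (hsm v k (le_of_lt hv)) 2
  -- rewrite RHS
  have hR : ∑ v ∈ range l, s v ^ 2 * pn v = ∑ v ∈ range m, G v * pn v := by
    have e1 : ∑ v ∈ range l, s v ^ 2 * pn v = ∑ v ∈ range l, G v * pn v := by
      refine Finset.sum_congr rfl fun v hv => ?_
      rw [Finset.mem_range] at hv
      rw [hG]; dsimp only; rw [if_pos hv]
    have e2 : ∑ v ∈ range (max l m), G v * pn v = ∑ v ∈ range l, G v * pn v := by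
      refine (Finset.sum_subset (Finset.range_subset_range.2 (le_max_left l m)) ?_).symm
      intro v _ hv
      rw [Finset.mem_range, not_lt] at hv
      rw [hG]; dsimp only; rw [if_neg (by omega), zero_mul]
    have e3 : ∑ v ∈ range (max l m), G v * pn v = ∑ v ∈ range m, G v * pn v := by
      refine (Finset.sum_subset (Finset.range_subset_range.2 (le_max_right l m)) ?_).symm
      intro v _ hv
      rw [Finset.mem_range, not_lt] at hv
      rw [hpm v hv, mul_zero]
    rw [e1, ← e2, e3]
  have hL : (∑ v ∈ range l, if v < m ∧ k ≤ v then s v ^ 2 else 0)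
      = ∑ v ∈ range m, (if k ≤ v then G v else 0) := by
    have e1 : ∑ v ∈ range (max l m), (if v < l ∧ v < m ∧ k ≤ v then s v ^ 2 else 0)
        = ∑ v ∈ range l, if v < m ∧ k ≤ v then s v ^ 2 else 0 := by
      rw [← Finset.sum_subset (Finset.range_subset_range.2 (le_max_left l m))
        (fun v _ hv => by rw [Finset.mem_range, not_lt] at hv; rw [if_neg (by omega)])]
      refine Finset.sum_congr rfl fun v hv => ?_
      rw [Finset.mem_range] at hv
      by_cases h : v < m ∧ k ≤ v
      · rw [if_pos ⟨hv, h⟩, if_pos h]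
      · rw [if_neg (by tauto), if_neg h]
    have e2 : ∑ v ∈ range (max l m), (if v < l ∧ v < m ∧ k ≤ v then s v ^ 2 else 0)
        = ∑ v ∈ range m, (if k ≤ v then G v else 0) := by
      rw [← Finset.sum_subset (Finset.range_subset_range.2 (le_max_right l m))
        (fun v _ hv => by rw [Finset.mem_range, not_lt] at hv; rw [if_neg (by omega)])]
      refine Finset.sum_congr rfl fun v hv => ?_
      rw [Finset.mem_range] at hv
      rw [hG]; dsimp only
      by_cases h2 : k ≤ v
      · by_cases h3 : v < l
        · rw [if_pos ⟨h3, hv, h2⟩, if_pos h2, if_pos h3]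
        · rw [if_neg (by tauto), if_pos h2, if_neg h3]
      · rw [if_neg (by tauto), if_neg h2]
    rw [← e1, e2]
  rw [hL, hR]
  -- split at k
  have hsplitT : ∑ v ∈ range m, (if k ≤ v then G v else 0)
      = ∑ v ∈ Finset.Ico k m, G v := by
    rw [Finset.range_eq_Ico, ← Finset.sum_Ico_consecutive _ (Nat.zero_le k) (le_of_lt hkm)]
    have z1 : ∑ v ∈ Finset.Ico 0 k, (if k ≤ v then G v else 0) = 0 :=
      Finset.sum_eq_zero fun v hv => by
        rw [Finset.mem_Ico] at hv; rw [if_neg (by omega)]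
    have z2 : ∑ v ∈ Finset.Ico k m, (if k ≤ v then G v else 0) = ∑ v ∈ Finset.Ico k m, G v :=
      Finset.sum_congr rfl fun v hv => by
        rw [Finset.mem_Ico] at hv; rw [if_pos hv.1]
    rw [z1, z2, zero_add]
  have hsplitR : ∑ v ∈ range m, G v * pn v
      = ∑ v ∈ Finset.Ico 0 k, G v * pn v + ∑ v ∈ Finset.Ico k m, G v * pn v := by
    rw [Finset.range_eq_Ico, ← Finset.sum_Ico_consecutive _ (Nat.zero_le k) (le_of_lt hkm)]
  rw [hsplitT, hsplitR]
  -- key chain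
  have c1 : ∑ v ∈ Finset.Ico k m, G v * (1 - pn v) ≤ s k ^ 2 * ∑ v ∈ Finset.Ico k m, (1 - pn v) := by
    rw [Finset.mul_sum]
    refine Finset.sum_le_sum fun v hv => ?_
    rw [Finset.mem_Ico] at hv
    exact mul_le_mul_of_nonneg_right (hGc v hv.1) (by linarith [hp1 v])
  have c2 : ∑ v ∈ Finset.Ico k m, (1 - pn v) ≤ ∑ v ∈ Finset.Ico 0 k, pn v := by
    have hcard : ∑ v ∈ Finset.Ico k m, (1:ℝ) = (m:ℝ) - k := by
      rw [Finset.sum_const, Nat.card_Ico, nsmul_eq_mul, mul_one]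
      push_cast [Nat.cast_sub (le_of_lt hkm)]
      ring
    have hsum2 : ∑ v ∈ Finset.Ico 0 k, pn v + ∑ v ∈ Finset.Ico k m, pn v = ∑ v ∈ range m, pn v := by
      rw [Finset.range_eq_Ico, ← Finset.sum_Ico_consecutive _ (Nat.zero_le k) (le_of_lt hkm)]
    rw [Finset.sum_sub_distrib, hcard]
    linarith
  have c3 : s k ^ 2 * ∑ v ∈ Finset.Ico 0 k, pn v ≤ ∑ v ∈ Finset.Ico 0 k, G v * pn v := by
    rw [Finset.mul_sum]
    refine Finset.sum_le_sum fun v hv => ?_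
    rw [Finset.mem_Ico] at hv
    exact mul_le_mul_of_nonneg_right (hGg v hv.2) (hp0 v)
  have c4 : s k ^ 2 * ∑ v ∈ Finset.Ico k m, (1 - pn v) ≤ s k ^ 2 * ∑ v ∈ Finset.Ico 0 k, pn v :=
    mul_le_mul_of_nonneg_left c2 (sq_nonneg _)
  have c5 : ∑ v ∈ Finset.Ico k m, G v * (1 - pn v)
      = ∑ v ∈ Finset.Ico k m, G v - ∑ v ∈ Finset.Ico k m, G v * pn v := by
    rw [← Finset.sum_sub_distrib]
    exact Finset.sum_congr rfl fun v _ => by ring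
  linarith

lemma exists_isometry {l m k : ℕ} (P : Matrix (Fin l) (Fin k) ℂ) (Qm : Matrix (Fin k) (Fin m) ℂ) :
    ∃ (d : ℕ) (Q : Matrix (Fin m) (Fin d) ℂ),
      Qᴴ * Q = 1 ∧ (P * Qm) * Q = 0 ∧ (m : ℝ) - k ≤ d := by
  classical
  set N : Matrix (Fin l) (Fin m) ℂ := P * Qm with hN
  set K : Submodule ℂ (EuclideanSpace ℂ (Fin m)) := LinearMap.ker (Matrix.toEuclideanLin N) with hK
  set d : ℕ := Module.finrank ℂ K with hd
  let b : OrthonormalBasis (Fin d) ℂ K := stdOrthonormalBasis ℂ K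
  refine ⟨d, Matrix.of (fun j t => ((b t : K) : EuclideanSpace ℂ (Fin m)) j), ?_, ?_, ?_⟩
  · ext t t'
    rw [Matrix.mul_apply, Matrix.one_apply]
    have := b.orthonormal
    rw [orthonormal_iff_ite] at this
    have h2 := this t t'
    rw [Submodule.coe_inner, PiLp.inner_apply] at h2
    simp only [RCLike.inner_apply] at h2
    rw [← h2]
    refine Finset.sum_congr rfl fun j _ => ?_
    rw [Matrix.conjTranspose_apply, Matrix.of_apply, Matrix.of_apply]
    rw [mul_comm]; rfl
  · ext i t
    have hmem : ((b t : K) : EuclideanSpace ℂ (Fin m)) ∈ LinearMap.ker (Matrix.toEuclideanLin N) :=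
      (b t).2
    have hmem2 : Matrix.toEuclideanLin N ((b t : K) : EuclideanSpace ℂ (Fin m)) = 0 :=
      LinearMap.mem_ker.mp hmem
    have : (Matrix.toEuclideanLin N ((b t : K) : EuclideanSpace ℂ (Fin m))) i = 0 := by
      rw [hmem2]; rfl
    rw [Matrix.zero_apply, Matrix.mul_apply]
    rw [Matrix.toEuclideanLin_apply] at this
    rw [← this]
    rfl
  · have hrn := LinearMap.finrank_range_add_finrank_ker (Matrix.toEuclideanLin N)
    rw [finrank_euclideanSpace, Fintype.card_fin] at hrn
    have hcomp : Matrix.toEuclideanLin N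
        = (Matrix.toEuclideanLin P).comp (Matrix.toEuclideanLin Qm) := by
      apply LinearMap.ext
      intro v
      simp [Matrix.toEuclideanLin_apply, Matrix.mulVec_mulVec, hN]
    have hle : Module.finrank ℂ (LinearMap.range (Matrix.toEuclideanLin N)) ≤ k := by
      rw [hcomp]
      refine le_trans (Submodule.finrank_mono (LinearMap.range_comp_le_range _ _)) ?_
      refine le_trans (LinearMap.finrank_range_le _) ?_
      rw [finrank_euclideanSpace, Fintype.card_fin]
    have hrn' : Module.finrank ℂ (LinearMap.range (Matrix.toEuclideanLin N)) + d = m := by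
      rw [hd, hK]; exact hrn
    have hmd : m ≤ k + d := by omega
    have := Nat.cast_le (α := ℝ) |>.mpr hmd
    push_cast at this
    linarith

lemma isometry_p_sum {m d : ℕ} (Q : Matrix (Fin m) (Fin d) ℂ) (hQ : Qᴴ * Q = 1) :
    ∑ j : Fin m, (∑ t : Fin d, ‖Q j t‖^2) = d := by
  have hcol : ∀ t : Fin d, ∑ j : Fin m, ‖Q j t‖^2 = 1 := by
    intro t
    have h1 : (Qᴴ * Q) t t = 1 := by rw [hQ, Matrix.one_apply_eq]
    rw [Matrix.mul_apply] at h1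
    have h2 : ∑ j : Fin m, ((‖Q j t‖^2 : ℝ) : ℂ) = 1 := by
      rw [← h1]
      refine Finset.sum_congr rfl fun j _ => ?_
      rw [Matrix.conjTranspose_apply,
        show (star (Q j t) : ℂ) = (starRingEnd ℂ) (Q j t) from rfl,
        mul_comm, Complex.mul_conj, ← Complex.sq_norm]
    exact_mod_cast h2
  rw [Finset.sum_comm]
  rw [Finset.sum_congr rfl fun t _ => hcol t]
  simp

lemma isometry_p_le_one {m d : ℕ} (Q : Matrix (Fin m) (Fin d) ℂ) (hQ : Qᴴ * Q = 1)
    (j : Fin m) : ∑ t : Fin d, ‖Q j t‖^2 ≤ 1 := by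
  set p : ℝ := ∑ t : Fin d, ‖Q j t‖^2 with hp
  have hp0 : 0 ≤ p := Finset.sum_nonneg fun t _ => sq_nonneg _
  set P : Matrix (Fin m) (Fin m) ℂ := Q * Qᴴ with hPdef
  have hPH : Pᴴ = P := by rw [hPdef, Matrix.conjTranspose_mul, Matrix.conjTranspose_conjTranspose]
  have hPP : P * P = P := by
    rw [hPdef, Matrix.mul_assoc, ← Matrix.mul_assoc Qᴴ Q Qᴴ, hQ, Matrix.one_mul]
  have hPjj : P j j = (p : ℂ) := by
    rw [hPdef, Matrix.mul_apply, hp]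
    push_cast
    refine Finset.sum_congr rfl fun t _ => ?_
    rw [Matrix.conjTranspose_apply,
      show (star (Q j t) : ℂ) = (starRingEnd ℂ) (Q j t) from rfl,
      Complex.mul_conj, ← Complex.sq_norm]
    push_cast; ring
  have hPP2 : P = Pᴴ * P := by rw [hPH, hPP]
  have hentry : (p : ℂ) = ∑ i : Fin m, ((Complex.normSq (P i j) : ℝ) : ℂ) := by
    rw [← hPjj]
    nth_rewrite 1 [hPP2]
    rw [Matrix.mul_apply]
    refine Finset.sum_congr rfl fun i _ => ?_
    rw [Matrix.conjTranspose_apply,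
      show (star (P i j) : ℂ) = (starRingEnd ℂ) (P i j) from rfl,
      mul_comm, Complex.mul_conj]
  have hreal : p = ∑ i : Fin m, Complex.normSq (P i j) := by exact_mod_cast hentry
  have hle : Complex.normSq (P j j) ≤ ∑ i : Fin m, Complex.normSq (P i j) :=
    Finset.single_le_sum (f := fun i => Complex.normSq (P i j))
      (fun i _ => Complex.normSq_nonneg _) (Finset.mem_univ j)
  rw [hPjj, Complex.normSq_ofReal] at hle
  nlinarith [hreal, hle]

lemma diag_EY {l m k : ℕ} (s : ℕ → ℝ) (hs0 : ∀ j, 0 ≤ s j) (hsm : ∀ i j, i ≤ j → s j ≤ s i)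
    (P : Matrix (Fin l) (Fin k) ℂ) (Qm : Matrix (Fin k) (Fin m) ℂ)
    (D : Matrix (Fin l) (Fin m) ℂ)
    (hD : ∀ a b, D a b = if (a:ℕ) = (b:ℕ) then (s (a:ℕ) : ℂ) else 0) :
    (∑ a : Fin l, ∑ b : Fin m, if (a:ℕ) = (b:ℕ) ∧ k ≤ (a:ℕ) then s (a:ℕ)^2 else 0)
      ≤ en (D - P * Qm) := by
  classical
  obtain ⟨d, Q, hQ, hNQ, hd⟩ := exists_isometry P Qm
  have h1 : en ((D - P * Qm) * Q) ≤ en (D - P * Qm) := en_mul_isometry_le Q hQ _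
  have h2 : (D - P * Qm) * Q = D * Q := by rw [Matrix.sub_mul, hNQ, sub_zero]
  set p : Fin m → ℝ := fun j => ∑ t : Fin d, ‖Q j t‖^2 with hpdef
  set pn : ℕ → ℝ := fun v => if h : v < m then p ⟨v, h⟩ else 0 with hpn
  have hDQ : ∀ (a : Fin l) (t : Fin d),
      (D * Q) a t = if h : (a:ℕ) < m then (s (a:ℕ) : ℂ) * Q ⟨(a:ℕ), h⟩ t else 0 := by
    intro a t
    rw [Matrix.mul_apply]
    by_cases h : (a:ℕ) < m
    · rw [dif_pos h]
      rw [Finset.sum_eq_single (⟨(a:ℕ), h⟩ : Fin m)]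
      · rw [hD]; simp
      · intro b _ hb
        rw [hD, if_neg, zero_mul]
        intro hab
        exact hb (Fin.ext hab.symm)
      · intro hb; exact absurd (Finset.mem_univ _) hb
    · rw [dif_neg h]
      refine Finset.sum_eq_zero fun b _ => ?_
      rw [hD, if_neg, zero_mul]
      intro hab
      exact h (hab ▸ b.isLt)
  have hen : en (D * Q) = ∑ v ∈ range l, s v ^ 2 * pn v := by
    rw [en]
    have hterm : ∀ a : Fin l, (∑ t : Fin d, ‖(D * Q) a t‖^2)
        = s (a:ℕ) ^ 2 * pn (a:ℕ) := by
      intro a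
      by_cases h : (a:ℕ) < m
      · rw [hpn]; dsimp only; rw [dif_pos h]
        rw [hpdef]; dsimp only
        rw [Finset.mul_sum]
        refine Finset.sum_congr rfl fun t _ => ?_
        rw [hDQ a t, dif_pos h, norm_mul, mul_pow, Complex.norm_real, Real.norm_eq_abs, sq_abs]
      · rw [hpn]; dsimp only; rw [dif_neg h, mul_zero]
        refine Finset.sum_eq_zero fun t _ => ?_
        rw [hDQ a t, dif_neg h, norm_zero]
        exact zero_pow (by norm_num)
    rw [Finset.sum_congr rfl fun a _ => hterm a]
    exact Fin.sum_univ_eq_sum_range (fun v => s v ^ 2 * pn v) l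
  have hLHS : (∑ a : Fin l, ∑ b : Fin m, if (a:ℕ) = (b:ℕ) ∧ k ≤ (a:ℕ) then s (a:ℕ)^2 else 0)
      = ∑ v ∈ range l, (if v < m ∧ k ≤ v then s v ^ 2 else 0) := by
    rw [← Fin.sum_univ_eq_sum_range (fun v => if v < m ∧ k ≤ v then s v ^ 2 else 0) l]
    refine Finset.sum_congr rfl fun a _ => ?_
    by_cases h : (a:ℕ) < m
    · rw [Finset.sum_eq_single (⟨(a:ℕ), h⟩ : Fin m)]
      · by_cases hk : k ≤ (a:ℕ)
        · rw [if_pos ⟨rfl, hk⟩, if_pos ⟨h, hk⟩]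
        · rw [if_neg (by tauto), if_neg (by tauto)]
      · intro b _ hb
        rw [if_neg]
        rintro ⟨hab, -⟩
        exact hb (Fin.ext hab.symm)
      · intro hb; exact absurd (Finset.mem_univ _) hb
    · rw [if_neg (by tauto)]
      refine Finset.sum_eq_zero fun b _ => ?_
      rw [if_neg]
      rintro ⟨hab, -⟩
      exact h (hab ▸ b.isLt)
  have hp0 : ∀ v, 0 ≤ pn v := by
    intro v; rw [hpn]; dsimp only
    split
    · exact Finset.sum_nonneg fun t _ => sq_nonneg _
    · exact le_refl 0
  have hp1 : ∀ v, pn v ≤ 1 := by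
    intro v; rw [hpn]; dsimp only
    split
    · exact isometry_p_le_one Q hQ _
    · exact zero_le_one
  have hpm : ∀ v, m ≤ v → pn v = 0 := by
    intro v hv; rw [hpn]; dsimp only; rw [dif_neg (by omega)]
  have hsum : (m : ℝ) - k ≤ ∑ v ∈ range m, pn v := by
    have : ∑ v ∈ range m, pn v = ∑ j : Fin m, p j := by
      rw [← Fin.sum_univ_eq_sum_range (fun v => pn v) m]
      refine Finset.sum_congr rfl fun j _ => ?_
      rw [hpn]; dsimp only; rw [dif_pos j.isLt]
    rw [this, hpdef]
    rw [isometry_p_sum Q hQ]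
    exact hd
  calc (∑ a : Fin l, ∑ b : Fin m, if (a:ℕ) = (b:ℕ) ∧ k ≤ (a:ℕ) then s (a:ℕ)^2 else 0)
      = ∑ v ∈ range l, (if v < m ∧ k ≤ v then s v ^ 2 else 0) := hLHS
    _ ≤ ∑ v ∈ range l, s v ^ 2 * pn v := comb s pn hs0 hsm hp0 hp1 hpm hsum
    _ = en (D * Q) := hen.symm
    _ = en ((D - P * Qm) * Q) := by rw [h2]
    _ ≤ en (D - P * Qm) := h1

end Core

section Slice
open Matrix

lemma dft_sub (x y : ZMod n → ℂ) (k : ZMod n) :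
    dft (fun t => x t - y t) k = dft x k - dft y k := by
  unfold dft
  rw [← Finset.sum_sub_distrib]
  exact Finset.sum_congr rfl fun j _ => by ring

lemma dft_zero (k : ZMod n) : dft (fun _ => (0:ℂ)) k = 0 := by
  unfold dft; simp

lemma dft_sumFin {p : ℕ} (g : Fin p → ZMod n → ℂ) (k : ZMod n) :
    dft (fun t => ∑ i : Fin p, g i t) k = ∑ i : Fin p, dft (g i) k := by
  unfold dft
  rw [Finset.sum_comm]
  refine Finset.sum_congr rfl fun j _ => ?_
  rw [Finset.sum_mul]

lemma dft_ite (c : Prop) [Decidable c] (x : ZMod n → ℂ) (k : ZMod n) :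
    dft (fun t => if c then x t else 0) k = if c then dft x k else 0 := by
  split
  · rfl
  · exact dft_zero k

lemma conv_cast (a b : ZMod n → ℝ) (t : ZMod n) :
    ((conv a b t : ℝ) : ℂ) = convC (fun x => (a x : ℂ)) (fun x => (b x : ℂ)) t := by
  unfold conv convC
  push_cast
  rfl

variable {l₀ m₀ p₀ : ℕ}

lemma hatSlice_sub (A B : Fin l₀ → Fin m₀ → ZMod n → ℝ) (f : ZMod n) :
    hatSlice (fun i j t => A i j t - B i j t) f = hatSlice A f - hatSlice B f := by
  ext i j
  rw [Matrix.sub_apply]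
  show dft (fun t => ((A i j t - B i j t : ℝ) : ℂ)) f = _
  rw [show (fun t => ((A i j t - B i j t : ℝ) : ℂ))
      = fun t => ((A i j t : ℝ) : ℂ) - ((B i j t : ℝ) : ℂ) by funext t; push_cast; ring]
  rw [dft_sub]
  rfl

lemma hatSlice_tmul (X : Fin l₀ → Fin p₀ → ZMod n → ℝ) (Y : Fin p₀ → Fin m₀ → ZMod n → ℝ)
    (f : ZMod n) : hatSlice (tmul X Y) f = hatSlice X f * hatSlice Y f := by
  ext i j
  rw [Matrix.mul_apply]
  show dft (fun t => ((tmul X Y i j t : ℝ) : ℂ)) f = _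
  rw [show (fun t => ((tmul X Y i j t : ℝ) : ℂ))
      = fun t => ∑ c : Fin p₀, convC (fun x => (X i c x : ℂ)) (fun x => (Y c j x : ℂ)) t by
    funext t
    rw [tmul]
    push_cast
    exact Finset.sum_congr rfl fun c _ => conv_cast _ _ t]
  rw [dft_sumFin]
  exact Finset.sum_congr rfl fun c _ => dft_convC _ _ f

lemma hatSlice_tT (U : Fin l₀ → Fin m₀ → ZMod n → ℝ) (f : ZMod n) :
    hatSlice (tT U) f = (hatSlice U f)ᴴ := by
  ext j i
  rw [Matrix.conjTranspose_apply]
  show dft (fun t => ((U i j (-t) : ℝ) : ℂ)) f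
      = (starRingEnd ℂ) (dft (fun t => ((U i j t : ℝ) : ℂ)) f)
  rw [dft_eq, dft_eq, map_sum]
  rw [← Equiv.sum_comp (Equiv.neg (ZMod n))
    (fun t => ((U i j (-t) : ℝ) : ℂ) * Ez n (t * f))]
  refine Finset.sum_congr rfl fun t _ => ?_
  rw [_root_.map_mul, Complex.conj_ofReal, conj_Ez]
  simp only [Equiv.neg_apply, neg_neg]
  rw [show (-t) * f = -(t * f) by ring]

lemma hatSlice_tId (m₁ : ℕ) (f : ZMod n) : hatSlice (tId n m₁) f = (1 : Matrix (Fin m₁) (Fin m₁) ℂ) := by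
  ext i j
  show dft (fun t => ((if i = j ∧ t = 0 then (1:ℝ) else 0 : ℝ) : ℂ)) f = _
  by_cases hij : i = j
  · subst hij
    simp only [eq_self_iff_true, true_and, Matrix.one_apply_eq]
    rw [dft_eq, Finset.sum_eq_single (0 : ZMod n)]
    · rw [if_pos rfl, show (0 : ZMod n) * f = 0 by ring, Ez_zero]
      norm_num
    · intro b _ hb
      rw [if_neg hb]
      norm_num
    · intro h; exact absurd (Finset.mem_univ _) h
  · simp only [hij, false_and, if_false, Matrix.one_apply_ne hij]
    exact dft_zero f

lemma hatSlice_trunc (S : Fin l₀ → Fin m₀ → ZMod n → ℝ) (k : ℕ) (f : ZMod n) (a : Fin l₀) (b : Fin m₀) :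
    hatSlice (fun a b t => if (a : ℕ) < k then S a b t else 0) f a b
      = if (a : ℕ) < k then hatSlice S f a b else 0 := by
  show dft (fun t => ((if (a : ℕ) < k then S a b t else 0 : ℝ) : ℂ)) f = _
  rw [show (fun t => ((if (a : ℕ) < k then S a b t else 0 : ℝ) : ℂ))
      = fun t => if (a : ℕ) < k then ((S a b t : ℝ) : ℂ) else 0 by
    funext t; split <;> simp]
  rw [dft_ite]
  rfl

lemma sum_en_hatSlice (T : Fin l₀ → Fin m₀ → ZMod n → ℝ) :
    ∑ f : ZMod n, en (hatSlice T f) = n * ∑ i : Fin l₀, ∑ j : Fin m₀, ∑ t : ZMod n, (T i j t)^2 := by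
  unfold en
  rw [Finset.sum_comm]
  rw [Finset.mul_sum]
  refine Finset.sum_congr rfl fun i _ => ?_
  rw [Finset.sum_comm]
  rw [Finset.mul_sum]
  refine Finset.sum_congr rfl fun j _ => ?_
  have : ∀ f : ZMod n, ‖hatSlice T f i j‖ ^ 2
      = ‖dft (fun t => ((T i j t : ℝ) : ℂ)) f‖ ^ 2 := fun f => rfl
  rw [Finset.sum_congr rfl fun f _ => this f]
  rw [parseval]
  congr 1
  refine Finset.sum_congr rfl fun t _ => ?_
  rw [Complex.norm_real, Real.norm_eq_abs, _root_.sq_abs]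

end Slice

end TSVD

end

open Matrix TSVD

/-- Eckart–Young optimality for the truncated tSVD: A_k is a best tubal rank-k
approximation among all products X*Y with X ∈ ℝ^{ℓ×k×n}, Y ∈ ℝ^{k×m×n}. -/
theorem tsvd_truncation_optimal {l m n : ℕ} [NeZero n] (k : ℕ)
    (A : Fin l → Fin m → ZMod n → ℝ)
    (U : Fin l → Fin l → ZMod n → ℝ) (S : Fin l → Fin m → ZMod n → ℝ)
    (V : Fin m → Fin m → ZMod n → ℝ) (σ : ZMod n → ℕ → ℝ)
    (hA : A = tmul (tmul U S) (tT V))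
    (hU1 : tmul (tT U) U = tId n l) (hU2 : tmul U (tT U) = tId n l)
    (hV1 : tmul (tT V) V = tId n m) (hV2 : tmul V (tT V) = tId n m)
    (hS : ∀ (i : ZMod n) (a : Fin l) (b : Fin m),
      hatSlice S i a b = if (a : ℕ) = (b : ℕ) then (σ i (a : ℕ) : ℂ) else 0)
    (hσnonneg : ∀ i j, 0 ≤ σ i j)
    (hσmono : ∀ i, ∀ j j' : ℕ, j ≤ j' → σ i j' ≤ σ i j) :
    ∀ (X : Fin l → Fin k → ZMod n → ℝ) (Y : Fin k → Fin m → ZMod n → ℝ),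
      frob (fun i j t => A i j t -
          tmul (tmul U (fun a b t => if (a : ℕ) < k then S a b t else 0)) (tT V) i j t)
        ≤ frob (fun i j t => A i j t - tmul X Y i j t) := by
  intro X Y
  set St : Fin l → Fin m → ZMod n → ℝ := fun a b t => if (a : ℕ) < k then S a b t else 0 with hSt
  have key : ∀ f : ZMod n,
      en (hatSlice (fun i j t => A i j t - tmul (tmul U St) (tT V) i j t) f)
        ≤ en (hatSlice (fun i j t => A i j t - tmul X Y i j t) f) := by
    intro f
    set Uh := hatSlice U f with hUh
    set Vh := hatSlice V f with hVh
    set Sh := hatSlice S f with hShd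
    set Xh := hatSlice X f with hXh
    set Yh := hatSlice Y f with hYh
    have hUU : Uhᴴ * Uh = 1 := by
      have h : hatSlice (tmul (tT U) U) f = hatSlice (tId n l) f := by rw [hU1]
      rwa [hatSlice_tmul, hatSlice_tT, hatSlice_tId] at h
    have hUUT : Uh * Uhᴴ = 1 := by
      have h : hatSlice (tmul U (tT U)) f = hatSlice (tId n l) f := by rw [hU2]
      rwa [hatSlice_tmul, hatSlice_tT, hatSlice_tId] at h
    have hVV : Vhᴴ * Vh = 1 := by
      have h : hatSlice (tmul (tT V) V) f = hatSlice (tId n m) f := by rw [hV1]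
      rwa [hatSlice_tmul, hatSlice_tT, hatSlice_tId] at h
    have hVVT : Vh * Vhᴴ = 1 := by
      have h : hatSlice (tmul V (tT V)) f = hatSlice (tId n m) f := by rw [hV2]
      rwa [hatSlice_tmul, hatSlice_tT, hatSlice_tId] at h
    have hAh : hatSlice A f = Uh * Sh * Vhᴴ := by
      rw [hA, hatSlice_tmul, hatSlice_tmul, hatSlice_tT]
    have hSf : ∀ (a : Fin l) (b : Fin m),
        Sh a b = if (a : ℕ) = (b : ℕ) then (σ f (a : ℕ) : ℂ) else 0 := by
      rw [hShd]; exact hS f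
    set Sth := hatSlice St f with hSthd
    have hSthab : ∀ (a : Fin l) (b : Fin m), Sth a b = if (a : ℕ) < k then Sh a b else 0 := by
      intro a b
      rw [hSthd, hSt, hShd]
      exact hatSlice_trunc S k f a b
    have hL : hatSlice (fun i j t => A i j t - tmul (tmul U St) (tT V) i j t) f
        = Uh * (Sh - Sth) * Vhᴴ := by
      rw [hatSlice_sub, hatSlice_tmul, hatSlice_tmul, hatSlice_tT, hAh]
      rw [Matrix.mul_sub, Matrix.sub_mul]
    have eL : en (Uh * (Sh - Sth) * Vhᴴ) = en (Sh - Sth) := by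
      rw [Matrix.mul_assoc, en_unitary_left Uh hUU]
      rw [en_unitary_right Vhᴴ (by rwa [Matrix.conjTranspose_conjTranspose])]
    have tailEq : en (Sh - Sth)
        = ∑ a : Fin l, ∑ b : Fin m,
            (if (a : ℕ) = (b : ℕ) ∧ k ≤ (a : ℕ) then (σ f (a : ℕ))^2 else 0) := by
      unfold en
      refine Finset.sum_congr rfl fun a _ => Finset.sum_congr rfl fun b _ => ?_
      rw [Matrix.sub_apply, hSthab a b]
      by_cases hk : (a : ℕ) < k
      · rw [if_pos hk, if_neg (by omega : ¬((a:ℕ) = (b:ℕ) ∧ k ≤ (a:ℕ))), sub_self]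
        simp
      · rw [if_neg hk, sub_zero, hSf a b]
        by_cases hab : (a : ℕ) = (b : ℕ)
        · rw [if_pos hab, if_pos ⟨hab, not_lt.mp hk⟩, Complex.norm_real, Real.norm_eq_abs, _root_.sq_abs]
        · rw [if_neg hab, if_neg (by tauto)]
          simp
    have hR : hatSlice (fun i j t => A i j t - tmul X Y i j t) f
        = (Uh * Sh * Vhᴴ) - Xh * Yh := by
      rw [hatSlice_sub, hatSlice_tmul, hAh]
    have eR : en ((Uh * Sh * Vhᴴ) - Xh * Yh) = en (Sh - (Uhᴴ * Xh) * (Yh * Vh)) := by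
      have e1 : en (Uhᴴ * ((((Uh * Sh * Vhᴴ) - Xh * Yh)) * Vh))
          = en ((Uh * Sh * Vhᴴ) - Xh * Yh) := by
        rw [en_unitary_left Uhᴴ (by rwa [Matrix.conjTranspose_conjTranspose]),
          en_unitary_right Vh hVVT]
      have e2 : Uhᴴ * ((((Uh * Sh * Vhᴴ) - Xh * Yh)) * Vh)
          = Sh - (Uhᴴ * Xh) * (Yh * Vh) := by
        rw [Matrix.sub_mul, Matrix.mul_sub]
        congr 1
        · simp only [Matrix.mul_assoc]
          rw [hVV, Matrix.mul_one, ← Matrix.mul_assoc, hUU, Matrix.one_mul]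
        · simp only [Matrix.mul_assoc]
      rw [← e1, e2]
    have core := diag_EY (σ f) (hσnonneg f) (fun i j hij => hσmono f i j hij)
      (Uhᴴ * Xh) (Yh * Vh) Sh hSf
    rw [hL, hR, eL, tailEq, eR]
    exact core
  have hsum : ∑ f : ZMod n, en (hatSlice (fun i j t => A i j t - tmul (tmul U St) (tT V) i j t) f)
      ≤ ∑ f : ZMod n, en (hatSlice (fun i j t => A i j t - tmul X Y i j t) f) :=
    Finset.sum_le_sum (fun f _ => key f)
  rw [sum_en_hatSlice, sum_en_hatSlice] at hsum
  have hn : 0 < (n : ℝ) := by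
    have := NeZero.ne n
    positivity
  unfold frob
  exact Real.sqrt_le_sqrt (le_of_mul_le_mul_left hsum hn)
end
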